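/- For n ≥ 2 and δ ≥ 1, the set B_δ = {α ∈ ℝⁿ : ∃C>0, |⟨ξ,α⟩| ≥ C|ξ|^{-(δ-1)} for all nonzero ξ ∈ ℤⁿ} is nonempty if and only if δ ≥ n. -/

import Mathlib

open Polynomial IntermediateField

/-- Euclidean norm of a frequency `ξ ∈ ℤⁿ`. -/
noncomputable def znorm {n : ℕ} (ξ : Fin n → ℤ) : ℝ :=
  Real.sqrt (∑ j, ((ξ j : ℝ)) ^ 2)

lemma znorm_nonneg {n : ℕ} (ξ : Fin n → ℤ) : 0 ≤ znorm ξ := Real.sqrt_nonneg _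

lemma one_le_znorm {n : ℕ} {ξ : Fin n → ℤ} (h : ξ ≠ 0) : 1 ≤ znorm ξ := by
  obtain ⟨j, hj⟩ := Function.ne_iff.1 h
  have h1 : (1 : ℝ) ≤ ((ξ j : ℝ)) ^ 2 := by
    have : (1 : ℤ) ≤ (ξ j) ^ 2 := by
      rcases lt_or_gt_of_ne (by simpa using hj) with h | h <;> nlinarith
    exact_mod_cast this
  have h2 : ((ξ j : ℝ)) ^ 2 ≤ ∑ i, ((ξ i : ℝ)) ^ 2 :=
    Finset.single_le_sum (f := fun i => ((ξ i : ℝ)) ^ 2) (fun i _ => sq_nonneg _)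
      (Finset.mem_univ j)
  exact Real.one_le_sqrt.2 (h1.trans h2)

lemma znorm_pos {n : ℕ} {ξ : Fin n → ℤ} (h : ξ ≠ 0) : 0 < znorm ξ :=
  lt_of_lt_of_le one_pos (one_le_znorm h)

lemma abs_le_znorm {n : ℕ} (ξ : Fin n → ℤ) (j : Fin n) : |(ξ j : ℝ)| ≤ znorm ξ := by
  rw [← Real.sqrt_sq_eq_abs]
  exact Real.sqrt_le_sqrt (Finset.single_le_sum (f := fun i => ((ξ i : ℝ)) ^ 2)
    (fun i _ => sq_nonneg _) (Finset.mem_univ j))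

lemma irr_int {n : ℕ} (hn : 2 ≤ n) : Irreducible ((X : ℚ[X]) ^ n - C 2) := by
  have hn0 : n ≠ 0 := by omega
  set p : ℤ[X] := X ^ n - C 2 with hp
  have hmonic : p.Monic := monic_X_pow_sub_C _ hn0
  have hdeg : p.natDegree = n := by simpa [hp] using natDegree_X_pow_sub_C (n := n) (r := (2:ℤ))
  have hprime : (Ideal.span {(2 : ℤ)}).IsPrime := by
    rw [Ideal.span_singleton_prime (by norm_num)]
    exact Int.prime_two
  have hE : p.IsEisensteinAt (Ideal.span {(2 : ℤ)}) := by
    constructor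
    · rw [hmonic.leadingCoeff]
      intro h
      rw [Ideal.mem_span_singleton] at h
      norm_num at h
    · intro i hi
      rw [hdeg] at hi
      rw [Ideal.mem_span_singleton]
      simp only [hp, coeff_sub, coeff_X_pow, coeff_C, if_neg hi.ne]
      split <;> simp
    · rw [Ideal.span_singleton_pow, Ideal.mem_span_singleton]
      simp only [hp, coeff_sub, coeff_X_pow, coeff_C, if_neg (by omega : ¬ (0 = n)), if_pos rfl]
      norm_num
  have hirr : Irreducible p := hE.irreducible hprime hmonic.isPrimitive (by omega)
  have := (IsPrimitive.Int.irreducible_iff_irreducible_map_cast hmonic.isPrimitive).1 hirr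
  convert this using 1
  simp only [hp, Polynomial.map_sub, Polynomial.map_pow, map_X, map_C]
  norm_num

lemma znorm_single {n : ℕ} (i : Fin n) : znorm (Pi.single i 1) = 1 := by
  unfold znorm
  rw [Fintype.sum_eq_single i (fun j hj => by simp [Pi.single_apply, hj])]
  simp

lemma znorm_le {n : ℕ} (hn : 1 ≤ n) (ξ : Fin n → ℤ) {c : ℝ} (h : ∀ j, |(ξ j : ℝ)| ≤ c) :
    znorm ξ ≤ n * c := by
  have hc : 0 ≤ c := le_trans (abs_nonneg _) (h ⟨0, hn⟩)
  have hn1 : (1:ℝ) ≤ n := by exact_mod_cast hn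
  have h1 : ∑ j, ((ξ j : ℝ))^2 ≤ ∑ _j : Fin n, c^2 := Finset.sum_le_sum (fun j _ => by
    rw [← sq_abs]
    exact pow_le_pow_left₀ (abs_nonneg _) (h j) 2)
  calc znorm ξ ≤ Real.sqrt (∑ _j : Fin n, c^2) := Real.sqrt_le_sqrt h1
  _ = Real.sqrt ((n : ℝ) * c^2) := by
      rw [Finset.sum_const, Finset.card_univ, Fintype.card_fin, nsmul_eq_mul]
  _ = Real.sqrt n * c := by rw [Real.sqrt_mul (Nat.cast_nonneg _), Real.sqrt_sq hc]
  _ ≤ n * c := by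
      refine mul_le_mul_of_nonneg_right ?_ hc
      calc Real.sqrt n ≤ Real.sqrt ((n:ℝ)^2) := Real.sqrt_le_sqrt (by nlinarith)
      _ = n := Real.sqrt_sq (by positivity)

set_option maxHeartbeats 1000000 in
lemma backward_key {n : ℕ} (hn : 2 ≤ n) :
    ∃ α : Fin n → ℝ, ∃ c > 0, ∀ ξ : Fin n → ℤ, ξ ≠ 0 →
      c ≤ |∑ j, (ξ j : ℝ) * α j| * znorm ξ ^ (n - 1 : ℕ) := by
  classical
  have hn0 : n ≠ 0 := by omega
  set θ : ℝ := (2 : ℝ) ^ ((n : ℝ)⁻¹) with hθ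
  have hθpow : θ ^ n = 2 := Real.rpow_inv_natCast_pow (by norm_num) hn0
  set p : ℚ[X] := X ^ n - C 2 with hp
  have pm : p.Monic := monic_X_pow_sub_C _ hn0
  have hroot : aeval θ p = 0 := by simp [hp, hθpow]
  have hirr : Irreducible p := irr_int hn
  have hint : IsIntegral ℚ θ := ⟨p, pm, by rw [← aeval_def]; exact hroot⟩
  have hmin : minpoly ℚ θ = p := (minpoly.eq_of_irreducible_of_monic hirr (by simpa using hroot) pm).symm
  haveI : FiniteDimensional ℚ ℚ⟮θ⟯ := IntermediateField.adjoin.finiteDimensional hint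
  set g : ℚ⟮θ⟯ := AdjoinSimple.gen ℚ θ with hg
  have hgθ : (g : ℝ) = θ := rfl
  have hgn : g ^ n = (2 : ℚ⟮θ⟯) := by
    apply Subtype.ext
    push_cast [hgθ]
    exact hθpow
  have hgint : IsIntegral ℤ g := by
    refine ⟨X ^ n - C 2, monic_X_pow_sub_C _ hn0, ?_⟩
    simp [hgn]
  have hdim : Module.finrank ℚ ℚ⟮θ⟯ = n := by
    rw [IntermediateField.adjoin.finrank hint, hmin, hp, natDegree_X_pow_sub_C]
  have hcard : Fintype.card (ℚ⟮θ⟯ →ₐ[ℚ] ℂ) = n := by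
    rw [AlgHom.card, hdim]
  -- the distinguished real embedding
  set σ₀ : ℚ⟮θ⟯ →ₐ[ℚ] ℂ := (Complex.ofRealAm.restrictScalars ℚ).comp
    ((IsScalarTower.toAlgHom ℚ ℚ⟮θ⟯ ℝ)) with hσ₀
  set M : ℝ := (n : ℝ) * 2 ^ n with hM
  have hMpos : 0 < M := by positivity
  refine ⟨fun j => θ ^ (j : ℕ), (M ^ (n - 1 : ℕ))⁻¹, by positivity, ?_⟩
  intro ξ hξ
  set x : ℚ⟮θ⟯ := ∑ j : Fin n, (ξ j : ℚ⟮θ⟯) * g ^ (j : ℕ) with hx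
  have hxsmul : x = ∑ j : Fin n, (ξ j : ℚ) • g ^ (j : ℕ) := by
    simp [hx, Algebra.smul_def]
  -- x ≠ 0
  set pb := IntermediateField.adjoin.powerBasis hint with hpb
  have hdim' : pb.dim = n := by rw [hpb, IntermediateField.adjoin.powerBasis_dim, hmin, hp,
    natDegree_X_pow_sub_C]
  have hx0 : x ≠ 0 := by
    intro h0
    obtain ⟨j, hj⟩ := Function.ne_iff.1 hξ
    have hsum : ∑ i : Fin pb.dim, (ξ (Fin.cast hdim' i) : ℚ) • pb.basis i = 0 := by
      rw [show (0 : ℚ⟮θ⟯) = x from h0.symm, hxsmul]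
      refine Fintype.sum_equiv (finCongr hdim') _ _ (fun i => ?_)
      rw [pb.basis_eq_pow]
      rfl
    have h2 := Fintype.linearIndependent_iff.1 pb.basis.linearIndependent _ hsum
      (Fin.cast hdim'.symm j)
    have h3 : (ξ j : ℚ) = 0 := h2
    exact hj (by exact_mod_cast h3)
  -- value at the real embedding
  have hreal : ‖σ₀ x‖ = |∑ j, (ξ j : ℝ) * θ ^ (j : ℕ)| := by
    have : σ₀ x = ((∑ j, (ξ j : ℝ) * θ ^ (j : ℕ) : ℝ) : ℂ) := by
      rw [hx]
      push_cast [map_sum, map_mul, map_pow]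
      rfl
    rw [this, Complex.norm_real, Real.norm_eq_abs]
  -- bound at every embedding
  have hbound : ∀ σ : ℚ⟮θ⟯ →ₐ[ℚ] ℂ, ‖σ x‖ ≤ M * znorm ξ := by
    intro σ
    have hσg : ‖σ g‖ ≤ 2 := by
      have h2 : ‖σ g‖ ^ n = 2 := by
        rw [← norm_pow, ← map_pow, hgn, map_ofNat]
        simp
      by_contra hc
      push_neg at hc
      have h3 := pow_lt_pow_left₀ hc (by norm_num) hn0
      rw [h2] at h3
      have h4 : (2:ℝ) ≤ 2 ^ n := by
        calc (2:ℝ) = 2 ^ 1 := (pow_one 2).symm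
        _ ≤ 2 ^ n := pow_le_pow_right₀ (by norm_num) (by omega)
      linarith
    have hz1 : 1 ≤ znorm ξ := one_le_znorm hξ
    calc ‖σ x‖ = ‖∑ j : Fin n, (ξ j : ℂ) * (σ g) ^ (j : ℕ)‖ := by
          rw [hx, map_sum]
          congr 1
          exact Finset.sum_congr rfl (fun j _ => by rw [map_mul, map_intCast, map_pow])
    _ ≤ ∑ j : Fin n, ‖(ξ j : ℂ) * (σ g) ^ (j : ℕ)‖ := norm_sum_le _ _
    _ ≤ ∑ _j : Fin n, znorm ξ * 2 ^ n := by
          refine Finset.sum_le_sum (fun j _ => ?_)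
          rw [norm_mul]
          refine mul_le_mul ?_ ?_ (by positivity) (le_trans (by norm_num) hz1)
          · rw [Complex.norm_intCast]
            exact abs_le_znorm ξ j
          · calc ‖(σ g) ^ (j:ℕ)‖ = ‖σ g‖ ^ (j:ℕ) := norm_pow _ _
            _ ≤ 2 ^ (j:ℕ) := pow_le_pow_left₀ (norm_nonneg _) hσg _
            _ ≤ 2 ^ n := pow_le_pow_right₀ (by norm_num) j.isLt.le
    _ = M * znorm ξ := by
          rw [Finset.sum_const, Finset.card_univ, Fintype.card_fin, nsmul_eq_mul, hM]
          ring
  -- x is integral over ℤ, so its norm is a nonzero integer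
  have hxint : IsIntegral ℤ x := by
    rw [hx]
    refine IsIntegral.sum _ (fun j _ => IsIntegral.mul ?_ (hgint.pow _))
    have h5 : ((ξ j : ℤ) : ℚ⟮θ⟯) = algebraMap ℤ ℚ⟮θ⟯ (ξ j) := by
      rw [algebraMap_int_eq]; rfl
    exact h5 ▸ isIntegral_algebraMap
  obtain ⟨m, hm⟩ := IsIntegrallyClosed.isIntegral_iff.1 (Algebra.isIntegral_norm ℚ hxint)
  have hm0 : m ≠ 0 := by
    intro h
    apply (Algebra.norm_ne_zero_iff (R := ℚ) (S := ℚ⟮θ⟯)).2 hx0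
    rw [← hm, h]
    simp
  have h1N : (1:ℝ) ≤ ‖algebraMap ℚ ℂ (Algebra.norm ℚ x)‖ := by
    rw [show (algebraMap ℚ ℂ (Algebra.norm ℚ x)) = (((Algebra.norm ℚ x : ℚ) : ℝ) : ℂ)
      by push_cast; rfl, Complex.norm_real, Real.norm_eq_abs, ← hm]
    have h7 : (1:ℚ) ≤ |(m:ℚ)| := by exact_mod_cast Int.one_le_abs hm0
    rw [show ((algebraMap ℤ ℚ m : ℚ) : ℝ) = (((m:ℚ) : ℚ) : ℝ) by norm_num, ← Rat.cast_abs]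
    exact_mod_cast h7
  have hprod : ‖algebraMap ℚ ℂ (Algebra.norm ℚ x)‖
      = ∏ σ : ℚ⟮θ⟯ →ₐ[ℚ] ℂ, ‖σ x‖ := by
    rw [Algebra.norm_eq_prod_embeddings, norm_prod]
  have hsplit : ∏ σ : ℚ⟮θ⟯ →ₐ[ℚ] ℂ, ‖σ x‖
      = ‖σ₀ x‖ * ∏ σ ∈ Finset.univ.erase σ₀, ‖σ x‖ :=
    (Finset.mul_prod_erase Finset.univ _ (Finset.mem_univ σ₀)).symm
  have hcard2 : (Finset.univ.erase σ₀).card = n - 1 := by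
    rw [Finset.card_erase_of_mem (Finset.mem_univ _), Finset.card_univ, hcard]
  have hrest : ∏ σ ∈ Finset.univ.erase σ₀, ‖σ x‖ ≤ (M * znorm ξ) ^ (n - 1) := by
    calc ∏ σ ∈ Finset.univ.erase σ₀, ‖σ x‖
        ≤ ∏ _σ ∈ Finset.univ.erase σ₀, (M * znorm ξ) :=
          Finset.prod_le_prod (fun _ _ => norm_nonneg _) (fun σ _ => hbound σ)
    _ = (M * znorm ξ) ^ (n - 1) := by rw [Finset.prod_const, hcard2]
  -- combine
  have hz1 : 1 ≤ znorm ξ := one_le_znorm hξ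
  have hMz : 0 ≤ M * znorm ξ := by positivity
  have main : (1:ℝ) ≤ |∑ j, (ξ j : ℝ) * θ ^ (j : ℕ)| * (M ^ (n-1) * znorm ξ ^ (n-1)) := by
    have h6 : (1:ℝ) ≤ ‖σ₀ x‖ * ∏ σ ∈ Finset.univ.erase σ₀, ‖σ x‖ := by
      rw [← hsplit, ← hprod]; exact h1N
    calc (1:ℝ) ≤ ‖σ₀ x‖ * ∏ σ ∈ Finset.univ.erase σ₀, ‖σ x‖ := h6
    _ ≤ ‖σ₀ x‖ * (M * znorm ξ) ^ (n-1) :=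
        mul_le_mul_of_nonneg_left hrest (norm_nonneg _)
    _ = |∑ j, (ξ j : ℝ) * θ ^ (j : ℕ)| * (M ^ (n-1) * znorm ξ ^ (n-1)) := by
        rw [hreal, mul_pow]
  have hMpow : (0:ℝ) < M ^ (n-1) := pow_pos hMpos _
  rw [inv_eq_one_div, div_le_iff₀ hMpow]
  nlinarith [main, abs_nonneg (∑ j, (ξ j : ℝ) * θ ^ (j : ℕ)), pow_pos (lt_of_lt_of_le one_pos hz1) (n-1)]

set_option maxHeartbeats 1000000 in
lemma forward_key {n : ℕ} (hn : 2 ≤ n) {δ : ℝ} (hδ : 1 ≤ δ)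
    (α : Fin n → ℝ) (C : ℝ) (hC : 0 < C)
    (h : ∀ ξ : Fin n → ℤ, ξ ≠ 0 → C * znorm ξ ^ (-(δ - 1)) ≤ |∑ j, (ξ j : ℝ) * α j|) :
    (n : ℝ) ≤ δ := by
  classical
  by_contra hcon
  push_neg at hcon
  set i₀ : Fin n := ⟨0, by omega⟩ with hi₀
  -- α i₀ ≠ 0
  have hα : C ≤ |α i₀| := by
    have h1 := h (Pi.single i₀ 1) (by
      intro hz
      have := congrFun hz i₀
      simp at this)
    rw [znorm_single, Real.one_rpow, mul_one] at h1
    refine h1.trans_eq ?_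
    congr 1
    rw [Fintype.sum_eq_single i₀ (fun j hj => by simp [Pi.single_apply, hj])]
    simp
  have ha : 0 < |α i₀| := lt_of_lt_of_le hC hα
  have hai : α i₀ ≠ 0 := fun hz => by simp [hz] at ha
  set β : Fin n → ℝ := fun j => α j / α i₀ with hβ
  set B : ℝ := ∑ j, |β j| with hB
  have hB0 : 0 ≤ B := Finset.sum_nonneg (fun j _ => abs_nonneg _)
  set D : ℝ := 2 * B + 2 with hD
  set A : ℝ := n * D with hA
  have hApos : 0 < A := by positivity
  -- the per-N inequality
  have hfin : ∀ N : ℕ, 1 ≤ N →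
      C * (A * N) ^ (-(δ - 1)) ≤ |α i₀| / (N : ℝ) ^ (n - 1 : ℕ) := by
    intro N hN
    set Mb : ℕ := (N + 1) ^ (n - 1) - 1 with hMb
    have hNpow : N ^ (n - 1) < (N + 1) ^ (n - 1) :=
      Nat.pow_lt_pow_left (by omega) (by omega)
    have hMb1 : N ^ (n - 1) ≤ Mb := by
      have : 1 ≤ N ^ (n-1) := Nat.one_le_pow _ _ (by omega)
      omega
    have hMbpos : 0 < Mb := by
      have : 1 ≤ N ^ (n-1) := Nat.one_le_pow _ _ (by omega)
      omega
    -- the sum functional on tuples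
    set u : ({j : Fin n // j ≠ i₀} → Fin (N + 1)) → ℝ :=
      fun κ => ∑ j : {j : Fin n // j ≠ i₀}, (κ j : ℝ) * β j.val with hu
    -- bucket map
    have hbucket : ∀ κ, ⌊(Mb : ℝ) * Int.fract (u κ)⌋.toNat < Mb := by
      intro κ
      have h0 : (0:ℝ) ≤ (Mb : ℝ) * Int.fract (u κ) :=
        mul_nonneg (Nat.cast_nonneg _) (Int.fract_nonneg _)
      have h1 : (Mb : ℝ) * Int.fract (u κ) < Mb := by
        have := Int.fract_lt_one (u κ)
        nlinarith [(by exact_mod_cast hMbpos : (0:ℝ) < (Mb:ℝ))]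
      have h2 : ⌊(Mb : ℝ) * Int.fract (u κ)⌋ < (Mb : ℤ) := by
        rw [Int.floor_lt]
        exact_mod_cast h1
      have h3 : 0 ≤ ⌊(Mb : ℝ) * Int.fract (u κ)⌋ := Int.floor_nonneg.2 h0
      omega
    set f : ({j : Fin n // j ≠ i₀} → Fin (N + 1)) → Fin Mb :=
      fun κ => ⟨⌊(Mb : ℝ) * Int.fract (u κ)⌋.toNat, hbucket κ⟩ with hf
    have hcards : Fintype.card (Fin Mb)
        < Fintype.card ({j : Fin n // j ≠ i₀} → Fin (N + 1)) := by
      rw [Fintype.card_fin, Fintype.card_fun, Fintype.card_fin]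
      have hsub : Fintype.card {j : Fin n // j ≠ i₀} = n - 1 := by
        rw [Fintype.card_subtype_compl, Fintype.card_subtype_eq, Fintype.card_fin]
      rw [hsub]
      omega
    obtain ⟨κ, κ', hne, hfeq⟩ := Fintype.exists_ne_map_eq_of_card_lt f hcards
    -- fractional parts are close
    have hMbR : (0:ℝ) < Mb := by exact_mod_cast hMbpos
    have hclose : |Int.fract (u κ) - Int.fract (u κ')| < 1 / Mb := by
      have hflooreq : ⌊(Mb : ℝ) * Int.fract (u κ)⌋ = ⌊(Mb : ℝ) * Int.fract (u κ')⌋ := by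
        have h3 := Int.floor_nonneg.2 (mul_nonneg (Nat.cast_nonneg (α := ℝ) Mb)
          (Int.fract_nonneg (u κ)))
        have h3' := Int.floor_nonneg.2 (mul_nonneg (Nat.cast_nonneg (α := ℝ) Mb)
          (Int.fract_nonneg (u κ')))
        have h4 := congrArg Fin.val hfeq
        simp only [hf] at h4
        omega
      have h5 := Int.floor_le ((Mb : ℝ) * Int.fract (u κ))
      have h6 := Int.lt_floor_add_one ((Mb : ℝ) * Int.fract (u κ))
      have h5' := Int.floor_le ((Mb : ℝ) * Int.fract (u κ'))
      have h6' := Int.lt_floor_add_one ((Mb : ℝ) * Int.fract (u κ'))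
      rw [hflooreq] at h5 h6
      have h7 : (Mb:ℝ) * Int.fract (u κ) - (Mb:ℝ) * Int.fract (u κ') < 1 := by linarith
      have h8 : (Mb:ℝ) * Int.fract (u κ') - (Mb:ℝ) * Int.fract (u κ) < 1 := by linarith
      have hMd : (Mb:ℝ) * (1/Mb) = 1 := by field_simp
      rw [abs_lt]
      constructor
      · nlinarith
      · nlinarith
    -- define the integer vector
    set ξ : Fin n → ℤ := fun j => if hj : j = i₀ then (⌊u κ'⌋ - ⌊u κ⌋)
      else (((κ ⟨j, hj⟩ : ℕ) : ℤ) - ((κ' ⟨j, hj⟩ : ℕ) : ℤ)) with hξdef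
    have hξi₀ : ξ i₀ = ⌊u κ'⌋ - ⌊u κ⌋ := by simp [hξdef]
    have hξne : ∀ (j : {j : Fin n // j ≠ i₀}),
        ξ j.val = ((κ j : ℕ) : ℤ) - ((κ' j : ℕ) : ℤ) := by
      intro j
      simp only [hξdef, dif_neg j.prop]
    have hξnz : ξ ≠ 0 := by
      obtain ⟨j, hj⟩ := Function.ne_iff.1 hne
      intro hz
      apply hj
      have h9 := congrFun hz j.val
      rw [hξne j] at h9
      have h10 : ((κ j : ℕ) : ℤ) = ((κ' j : ℕ) : ℤ) := by
        simpa [sub_eq_zero] using h9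
      exact Fin.val_injective (by exact_mod_cast h10)
    -- the sum identity
    have hβi₀ : β i₀ = 1 := by rw [hβ]; exact div_self hai
    have hsub : ∀ (fn : Fin n → ℝ), ∑ j ∈ Finset.univ.erase i₀, fn j
        = ∑ j : {j : Fin n // j ≠ i₀}, fn j.val := fun fn =>
      Finset.sum_subtype (Finset.univ.erase i₀) (by simp) fn
    have hsumβ : ∑ j, (ξ j : ℝ) * β j = Int.fract (u κ) - Int.fract (u κ') := by
      rw [← Finset.add_sum_erase _ _ (Finset.mem_univ i₀), hsub (fun j => (ξ j : ℝ) * β j)]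
      have hterm : ∀ (j : {j : Fin n // j ≠ i₀}),
          (ξ j.val : ℝ) * β j.val = (κ j : ℝ) * β j.val - (κ' j : ℝ) * β j.val := by
        intro j
        rw [hξne j]
        push_cast
        ring
      rw [Finset.sum_congr rfl (fun j _ => hterm j), Finset.sum_sub_distrib]
      rw [hξi₀, hβi₀, Int.fract, Int.fract]
      push_cast
      rw [hu]
      ring
    -- the linear form is small
    have hαβ : ∀ j, α j = α i₀ * β j := by
      intro j
      rw [hβ]
      field_simp
    have hsmall : |∑ j, (ξ j : ℝ) * α j| ≤ |α i₀| / Mb := by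
      have he : ∑ j, (ξ j : ℝ) * α j = α i₀ * ∑ j, (ξ j : ℝ) * β j := by
        rw [Finset.mul_sum]
        exact Finset.sum_congr rfl (fun j _ => by rw [hαβ j]; ring)
      rw [he, abs_mul, hsumβ, div_eq_mul_inv, ← one_div]
      exact mul_le_mul_of_nonneg_left hclose.le (abs_nonneg _)
    -- the vector is not too large
    have hNR1 : (1:ℝ) ≤ N := by exact_mod_cast hN
    have huB : ∀ κ₀ : ({j : Fin n // j ≠ i₀} → Fin (N + 1)), |u κ₀| ≤ N * B := by
      intro κ₀
      calc |u κ₀| ≤ ∑ j : {j : Fin n // j ≠ i₀}, |(κ₀ j : ℝ) * β j.val| := by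
            rw [hu]
            exact Finset.abs_sum_le_sum_abs _ _
      _ ≤ ∑ j : {j : Fin n // j ≠ i₀}, (N : ℝ) * |β j.val| := by
            refine Finset.sum_le_sum (fun j _ => ?_)
            rw [abs_mul]
            refine mul_le_mul_of_nonneg_right ?_ (abs_nonneg _)
            rw [abs_of_nonneg (by positivity)]
            exact_mod_cast Nat.lt_succ_iff.1 (κ₀ j).isLt
      _ = (N : ℝ) * ∑ j : {j : Fin n // j ≠ i₀}, |β j.val| := by rw [Finset.mul_sum]
      _ ≤ (N : ℝ) * B := by
            refine mul_le_mul_of_nonneg_left ?_ (Nat.cast_nonneg _)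
            rw [hB, ← hsub (fun j => |β j|)]
            exact Finset.sum_le_sum_of_subset_of_nonneg (Finset.subset_univ _)
              (fun j _ _ => abs_nonneg _)
    have hfloorabs : ∀ v : ℝ, |(⌊v⌋ : ℝ)| ≤ |v| + 1 := by
      intro v
      rw [abs_le]
      constructor
      · linarith [Int.sub_one_lt_floor v, neg_abs_le v]
      · linarith [Int.floor_le v, le_abs_self v]
    have hbnd : ∀ j, |(ξ j : ℝ)| ≤ N * D := by
      intro j
      by_cases hj : j = i₀
      · subst hj
        rw [hξi₀]
        push_cast
        calc |(⌊u κ'⌋ : ℝ) - (⌊u κ⌋ : ℝ)| ≤ |(⌊u κ'⌋ : ℝ)| + |(⌊u κ⌋ : ℝ)| := abs_sub _ _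
        _ ≤ (|u κ'| + 1) + (|u κ| + 1) := add_le_add (hfloorabs _) (hfloorabs _)
        _ ≤ (N * B + 1) + (N * B + 1) := by linarith [huB κ, huB κ']
        _ ≤ N * D := by rw [hD]; nlinarith
      · rw [hξne ⟨j, hj⟩]
        push_cast
        have hk1 : ((κ ⟨j, hj⟩ : ℕ) : ℝ) ≤ N := by
          exact_mod_cast Nat.lt_succ_iff.1 (κ ⟨j, hj⟩).isLt
        have hk2 : ((κ' ⟨j, hj⟩ : ℕ) : ℝ) ≤ N := by
          exact_mod_cast Nat.lt_succ_iff.1 (κ' ⟨j, hj⟩).isLt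
        have hk3 : (0:ℝ) ≤ ((κ ⟨j, hj⟩ : ℕ) : ℝ) := by positivity
        have hk4 : (0:ℝ) ≤ ((κ' ⟨j, hj⟩ : ℕ) : ℝ) := by positivity
        rw [abs_le]
        constructor <;> [nlinarith; nlinarith]
    have hzle : znorm ξ ≤ A * N := by
      calc znorm ξ ≤ n * (N * D) := znorm_le (by omega) ξ hbnd
      _ = A * N := by rw [hA]; ring
    -- conclude the per-N inequality
    have hz1 : (1:ℝ) ≤ znorm ξ := one_le_znorm hξnz
    calc C * (A * N) ^ (-(δ - 1)) ≤ C * znorm ξ ^ (-(δ - 1)) := by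
          refine mul_le_mul_of_nonneg_left ?_ hC.le
          exact Real.rpow_le_rpow_of_nonpos (lt_of_lt_of_le one_pos hz1) hzle (by linarith)
    _ ≤ |∑ j, (ξ j : ℝ) * α j| := h ξ hξnz
    _ ≤ |α i₀| / Mb := hsmall
    _ ≤ |α i₀| / (N : ℝ) ^ (n - 1 : ℕ) := by
          have hNpowR : (0:ℝ) < (N : ℝ) ^ (n - 1 : ℕ) := by positivity
          have hcast : ((N : ℝ)) ^ (n - 1 : ℕ) ≤ (Mb : ℝ) := by exact_mod_cast hMb1
          gcongr
  -- derive the contradiction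
  set E : ℝ := |α i₀| * A ^ (δ - 1) / C with hE
  have hEpos : 0 < E := by
    rw [hE]
    have := Real.rpow_pos_of_pos hApos (δ - 1)
    positivity
  obtain ⟨N, hNlarge⟩ := exists_nat_ge (max 1 (E ^ (((n:ℝ) - δ)⁻¹) + 1))
  have hN1 : 1 ≤ N := by
    have := le_trans (le_max_left 1 (E ^ (((n:ℝ) - δ)⁻¹) + 1)) hNlarge
    exact_mod_cast this
  have hNR : E ^ (((n:ℝ) - δ)⁻¹) < N :=
    lt_of_lt_of_le (lt_add_one _) (le_trans (le_max_right _ _) hNlarge)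
  have hkey := hfin N hN1
  set R : ℝ := (N : ℝ) with hR
  have hR1 : 1 ≤ R := by rw [hR]; exact_mod_cast hN1
  have hRpos : 0 < R := lt_of_lt_of_le one_pos hR1
  have hP : (0:ℝ) < A ^ (δ-1) := Real.rpow_pos_of_pos hApos _
  have hQ : (0:ℝ) < R ^ (δ-1) := Real.rpow_pos_of_pos hRpos _
  have hS : (0:ℝ) < R ^ ((n:ℝ)-δ) := Real.rpow_pos_of_pos hRpos _
  have e1 : (A*R) ^ (-(δ-1)) = (A^(δ-1) * R^(δ-1))⁻¹ := by
    rw [Real.rpow_neg (by positivity), Real.mul_rpow hApos.le hRpos.le]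
  have e2 : (R:ℝ) ^ (n-1:ℕ) = R ^ ((n:ℝ)-δ) * R^(δ-1) := by
    rw [← Real.rpow_add hRpos, ← Real.rpow_natCast R (n-1)]
    congr 1
    push_cast [Nat.cast_sub (by omega : 1 ≤ n)]
    ring
  rw [e1, e2] at hkey
  have hstep : C * R ^ ((n:ℝ) - δ) ≤ |α i₀| * A ^ (δ - 1) := by
    have h4 := mul_le_mul_of_nonneg_right hkey
      (le_of_lt (by positivity : (0:ℝ) < A^(δ-1) * R^(δ-1) * R^((n:ℝ)-δ)))
    calc C * R ^ ((n:ℝ)-δ)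
        = C * (A^(δ-1) * R^(δ-1))⁻¹ * (A^(δ-1) * R^(δ-1) * R^((n:ℝ)-δ)) := by
          field_simp
    _ ≤ |α i₀| / (R^((n:ℝ)-δ) * R^(δ-1)) * (A^(δ-1) * R^(δ-1) * R^((n:ℝ)-δ)) := h4
    _ = |α i₀| * A^(δ-1) := by
          field_simp
  have hcontr : R ^ ((n:ℝ) - δ) ≤ E := by
    rw [hE, le_div_iff₀ hC]
    linarith [hstep]
  have hlt : E < R ^ ((n:ℝ) - δ) := by
    have hnd : 0 < (n:ℝ) - δ := by linarith
    have h11 := Real.rpow_lt_rpow (Real.rpow_nonneg hEpos.le _) hNR hnd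
    rwa [← Real.rpow_mul hEpos.le, inv_mul_cancel₀ (ne_of_gt hnd), Real.rpow_one] at h11
  linarith

theorem stmt8 {n : ℕ} (hn : 2 ≤ n) (δ : ℝ) (hδ : 1 ≤ δ) :
    (∃ α : Fin n → ℝ, ∃ C > 0, ∀ ξ : Fin n → ℤ, ξ ≠ 0 →
      |∑ j, (ξ j : ℝ) * α j| ≥ C * znorm ξ ^ (-(δ - 1))) ↔ (n : ℝ) ≤ δ := by
  constructor
  · rintro ⟨α, C, hC, hξ⟩
    exact forward_key hn hδ α C hC (fun ξ hz => hξ ξ hz)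
  · intro hnδ
    obtain ⟨α, c, hc, hkey⟩ := backward_key hn
    refine ⟨α, c, hc, ?_⟩
    intro ξ hz
    have hz1 : (1:ℝ) ≤ znorm ξ := one_le_znorm hz
    have hzpos : (0:ℝ) < znorm ξ := lt_of_lt_of_le one_pos hz1
    have hppos : (0:ℝ) < znorm ξ ^ (n - 1 : ℕ) := pow_pos hzpos _
    have h1 : znorm ξ ^ (-(δ - 1)) ≤ znorm ξ ^ (-((n:ℝ) - 1)) :=
      Real.rpow_le_rpow_of_exponent_le hz1 (by linarith)
    have h2 : znorm ξ ^ (-((n:ℝ) - 1)) = (znorm ξ ^ (n - 1 : ℕ))⁻¹ := by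
      rw [Real.rpow_neg hzpos.le, ← Real.rpow_natCast (znorm ξ) (n-1)]
      congr 2
      push_cast [Nat.cast_sub (by omega : 1 ≤ n)]
      ring
    have h3 := hkey ξ hz
    rw [ge_iff_le]
    calc c * znorm ξ ^ (-(δ - 1)) ≤ c * (znorm ξ ^ (n - 1 : ℕ))⁻¹ := by
          rw [← h2]
          exact mul_le_mul_of_nonneg_left h1 hc.le
    _ ≤ |∑ j, (ξ j : ℝ) * α j| := by
          rw [mul_inv_le_iff₀ hppos]
          linarith
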